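/- For each n ≥ 1 let (U_j^{(n)})_{j∈ℕ} be a sequence of i.i.d. non-negative integrable random variables. Suppose that for every non-negative real sequence (a_j)_{j∈ℕ} with ∑_{j∈ℕ} a_j < ∞ one has ∑_{j=1}^∞ a_j U_j^{(n)} → 0 in probability as n → ∞. Then U_1^{(n)} → 0 in probability as n → ∞ and sup_n E(U_1^{(n)}) < ∞. -/

import Mathlib

open MeasureTheory ProbabilityTheory Filter Topology ENNReal

/-- For `x ≥ 0`, `min x 1 / 2 ≤ 1 - exp (-x)`. -/
lemma aux_min_exp (x : ℝ) (hx : 0 ≤ x) : min x 1 / 2 ≤ 1 - Real.exp (-x) := by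
  have h := Real.add_one_le_exp x
  have hpos : (0:ℝ) < 1 + x := by linarith
  have hex : Real.exp (-x) ≤ 1 / (1 + x) := by
    rw [Real.exp_neg, one_div]
    exact inv_anti₀ hpos (by linarith)
  rcases le_total x 1 with h1 | h1
  · rw [min_eq_left h1]
    have hx2 : x / 2 ≤ 1 - 1 / (1 + x) := by
      rw [div_le_iff₀ (by norm_num : (0:ℝ) < 2)] at *
      rw [one_div, ← sub_nonneg]
      have hinv : (1 + x)⁻¹ * (1 + x) = 1 := inv_mul_cancel₀ hpos.ne'
      nlinarith [mul_pos (inv_pos.2 hpos) hpos]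
    linarith
  · rw [min_eq_right h1]
    have : 1 / (1 + x) ≤ 1 / 2 := by
      apply one_div_le_one_div_of_le <;> linarith
    linarith

section AuxLemmas

variable {Ω : Type*} [MeasurableSpace Ω] (μ : Measure Ω) [IsProbabilityMeasure μ]
variable (U : ℕ → ℕ → Ω → ℝ)

/-- Integrability of `exp (-(s * U n j))`. -/
lemma aux_exp_int (hmeas : ∀ n j, Measurable (U n j)) (hnonneg : ∀ n j ω, 0 ≤ U n j ω)
    (n j : ℕ) (s : ℝ) (hs : 0 ≤ s) :
    Integrable (fun ω => Real.exp (-(s * U n j ω))) μ := by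
  apply (integrable_const (1:ℝ)).mono'
    (((hmeas n j).const_mul s).neg.exp.aestronglyMeasurable)
  filter_upwards with ω
  rw [Real.norm_eq_abs, abs_of_pos (Real.exp_pos _)]
  apply Real.exp_le_one_iff.2
  have := mul_nonneg hs (hnonneg n j ω)
  show -(s * U n j ω) ≤ 0
  linarith

lemma aux_phi_le_one (hmeas : ∀ n j, Measurable (U n j)) (hnonneg : ∀ n j ω, 0 ≤ U n j ω)
    (n : ℕ) (s : ℝ) (hs : 0 ≤ s) :
    (∫ ω, Real.exp (-(s * U n 0 ω)) ∂μ) ≤ 1 := by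
  calc (∫ ω, Real.exp (-(s * U n 0 ω)) ∂μ) ≤ ∫ _ω, (1:ℝ) ∂μ := by
        apply integral_mono (aux_exp_int μ U hmeas hnonneg n 0 s hs) (integrable_const 1)
        intro ω
        apply Real.exp_le_one_iff.2
        have := mul_nonneg hs (hnonneg n 0 ω)
        linarith
    _ = 1 := by simp

/-- The key quantitative estimate: if `∫ min (c·U, N) ≥ 8` then `N (1 - φ(c/N)) ≥ 4`. -/
lemma aux_key_est (hmeas : ∀ n j, Measurable (U n j)) (hnonneg : ∀ n j ω, 0 ≤ U n j ω)
    (n : ℕ) (N : ℕ) (hN : 1 ≤ N) (c : ℝ) (hc : 0 < c)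
    (h8 : (8:ℝ) ≤ ∫ ω, min (c * U n 0 ω) N ∂μ) :
    (4:ℝ) ≤ N * (1 - ∫ ω, Real.exp (-((c / N) * U n 0 ω)) ∂μ) := by
  have hNpos : (0:ℝ) < N := by exact_mod_cast hN
  set s : ℝ := c / N with hs
  have hs0 : 0 ≤ s := by positivity
  have hmin_int : Integrable (fun ω => min (s * U n 0 ω) 1) μ := by
    apply (integrable_const (1:ℝ)).mono'
      (((hmeas n 0).const_mul s).min measurable_const).aestronglyMeasurable
    filter_upwards with ω
    have h0 : (0:ℝ) ≤ min (s * U n 0 ω) 1 :=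
      le_min (mul_nonneg hs0 (hnonneg n 0 ω)) zero_le_one
    rw [Real.norm_eq_abs, abs_of_nonneg h0]
    exact min_le_right _ _
  have hsub : (1:ℝ) - (∫ ω, Real.exp (-(s * U n 0 ω)) ∂μ)
      = ∫ ω, (1 - Real.exp (-(s * U n 0 ω))) ∂μ := by
    rw [integral_sub (integrable_const 1) (aux_exp_int μ U hmeas hnonneg n 0 s hs0)]
    simp
  have hmono : (∫ ω, min (s * U n 0 ω) 1 / 2 ∂μ)
      ≤ ∫ ω, (1 - Real.exp (-(s * U n 0 ω))) ∂μ := by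
    apply integral_mono (hmin_int.div_const 2)
      ((integrable_const 1).sub (aux_exp_int μ U hmeas hnonneg n 0 s hs0))
    intro ω
    exact aux_min_exp _ (mul_nonneg hs0 (hnonneg n 0 ω))
  have hNmin : ∀ ω, (N:ℝ) * min (s * U n 0 ω) 1 = min (c * U n 0 ω) N := by
    intro ω
    rcases le_total (s * U n 0 ω) 1 with h | h
    · rw [min_eq_left h, min_eq_left, hs]
      · field_simp
      · calc c * U n 0 ω = N * (s * U n 0 ω) := by rw [hs]; field_simp
          _ ≤ N * 1 := by nlinarith
          _ = N := mul_one _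
    · rw [min_eq_right h, mul_one, min_eq_right]
      calc (N:ℝ) = N * 1 := (mul_one _).symm
        _ ≤ N * (s * U n 0 ω) := by nlinarith
        _ = c * U n 0 ω := by rw [hs]; field_simp
  have h8' : (8:ℝ) ≤ N * ∫ ω, min (s * U n 0 ω) 1 ∂μ := by
    rw [← MeasureTheory.integral_const_mul]
    calc (8:ℝ) ≤ ∫ ω, min (c * U n 0 ω) N ∂μ := h8
      _ = ∫ ω, (N:ℝ) * min (s * U n 0 ω) 1 ∂μ := by
          congr 1; funext ω; rw [hNmin ω]
  have h2 : (8:ℝ) / 2 ≤ N * ∫ ω, (1 - Real.exp (-(s * U n 0 ω))) ∂μ := by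
    have hdiv : (∫ ω, min (s * U n 0 ω) 1 / 2 ∂μ)
        = (∫ ω, min (s * U n 0 ω) 1 ∂μ) / 2 := by rw [integral_div]
    nlinarith [hmono, h8']
  rw [hsub]
  linarith

omit [IsProbabilityMeasure μ] in
/-- Almost sure summability of `∑ a j * U n j` for summable nonnegative `a`. -/
lemma aux_ae_summable (hmeas : ∀ n j, Measurable (U n j))
    (hident : ∀ n j, IdentDistrib (U n j) (U n 0) μ μ)
    (hnonneg : ∀ n j ω, 0 ≤ U n j ω) (hint : ∀ n j, Integrable (U n j) μ)
    (n : ℕ) (a : ℕ → ℝ) (ha : ∀ j, 0 ≤ a j) (hsa : Summable a) :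
    ∀ᵐ ω ∂μ, Summable (fun j => a j * U n j ω) := by
  have hIfin : ∫⁻ ω, ENNReal.ofReal (U n 0 ω) ∂μ ≠ ∞ := by
    have h := (hint n 0).2
    rw [hasFiniteIntegral_iff_ofReal (.of_forall (hnonneg n 0))] at h
    exact h.ne
  have hIj : ∀ j, ∫⁻ ω, ENNReal.ofReal (U n j ω) ∂μ = ∫⁻ ω, ENNReal.ofReal (U n 0 ω) ∂μ :=
    fun j => ((hident n j).comp ENNReal.measurable_ofReal).lintegral_eq
  have hfin : ∫⁻ ω, ∑' j, ENNReal.ofReal (a j * U n j ω) ∂μ ≠ ∞ := by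
    rw [lintegral_tsum (f := fun j ω => ENNReal.ofReal (a j * U n j ω)) fun j =>
      (ENNReal.measurable_ofReal.comp ((hmeas n j).const_mul (a j))).aemeasurable]
    have heq : ∀ j, ∫⁻ ω, ENNReal.ofReal (a j * U n j ω) ∂μ
        = ENNReal.ofReal (a j) * ∫⁻ ω, ENNReal.ofReal (U n 0 ω) ∂μ := by
      intro j
      rw [← hIj j, ← lintegral_const_mul (ENNReal.ofReal (a j)) (hmeas n j).ennreal_ofReal]
      congr 1; funext ω
      rw [ENNReal.ofReal_mul (ha j)]
    rw [tsum_congr heq, ENNReal.tsum_mul_right]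
    apply ENNReal.mul_ne_top _ hIfin
    rw [← ENNReal.ofReal_tsum_of_nonneg ha hsa]
    exact ENNReal.ofReal_ne_top
  have hmeas' : Measurable fun ω => ∑' j, ENNReal.ofReal (a j * U n j ω) :=
    Measurable.ennreal_tsum fun j =>
      ENNReal.measurable_ofReal.comp ((hmeas n j).const_mul (a j))
  filter_upwards [ae_lt_top hmeas' hfin] with ω hω
  have h := ENNReal.summable_toReal hω.ne
  apply h.congr
  intro j
  rw [ENNReal.toReal_ofReal (mul_nonneg (ha j) (hnonneg n j ω))]

omit [IsProbabilityMeasure μ] in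
/-- Expectation of the exponential of a finite weighted sum of the independent
variables factors as a product (all factors expressed via the common distribution). -/
lemma aux_prod_identity (hmeas : ∀ n j, Measurable (U n j))
    (hindep : ∀ n, iIndepFun (U n) μ)
    (hident : ∀ n j, IdentDistrib (U n j) (U n 0) μ μ)
    (n : ℕ) (a : ℕ → ℝ) (M : ℕ) :
    (∫ ω, Real.exp (-(∑ j ∈ Finset.range M, a j * U n j ω)) ∂μ)
      = ∏ j ∈ Finset.range M, ∫ ω, Real.exp (-(a j * U n 0 ω)) ∂μ := by
  have hX : iIndepFun (fun j ω => a j * U n j ω) μ :=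
    (hindep n).comp (fun j x => a j * x) (fun j => measurable_const_mul _)
  have hXmeas : ∀ j, Measurable (fun ω => a j * U n j ω) :=
    fun j => (hmeas n j).const_mul (a j)
  have hmgf := hX.mgf_sum hXmeas (Finset.range M) (t := -1)
  simp only [mgf, Finset.sum_apply, neg_one_mul] at hmgf
  rw [hmgf]
  apply Finset.prod_congr rfl
  intro j _
  have h : IdentDistrib (fun ω => Real.exp (-(a j * U n j ω)))
      (fun ω => Real.exp (-(a j * U n 0 ω))) μ μ :=
    (hident n j).comp (((measurable_const_mul (a j)).neg.exp))
  exact h.integral_eq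

/-- Lower bound `3/4` for the expectation of the exponential, given that the full series
is small with large probability. -/
lemma aux_lower_34 (hmeas : ∀ n j, Measurable (U n j)) (hnonneg : ∀ n j ω, 0 ≤ U n j ω)
    (n : ℕ) (a : ℕ → ℝ) (ha : ∀ j, 0 ≤ a j) (M : ℕ)
    (hae : ∀ᵐ ω ∂μ, Summable (fun j => a j * U n j ω))
    (hp : μ {ω : Ω | 1/8 < |∑' j, a j * U n j ω|} < ENNReal.ofReal (1/8)) :
    (3/4 : ℝ) ≤ ∫ ω, Real.exp (-(∑ j ∈ Finset.range M, a j * U n j ω)) ∂μ := by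
  obtain ⟨B, hBsub, hBmeas, hBeq⟩ :=
    exists_measurable_superset μ {ω : Ω | 1/8 < |∑' j, a j * U n j ω|}
  have hμB : μ B < ENNReal.ofReal (1/8) := by rw [hBeq]; exact hp
  have hBtoReal : (μ B).toReal ≤ 1/8 := by
    have h1 : (μ B).toReal ≤ (ENNReal.ofReal (1/8)).toReal :=
      ENNReal.toReal_mono ENNReal.ofReal_ne_top hμB.le
    rwa [ENNReal.toReal_ofReal (by norm_num)] at h1
  have hptwise : ∀ᵐ ω ∂μ, (7/8 : ℝ) - Set.indicator B (fun _ => (1:ℝ)) ω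
      ≤ Real.exp (-(∑ j ∈ Finset.range M, a j * U n j ω)) := by
    filter_upwards [hae] with ω hω
    by_cases hB : ω ∈ B
    · rw [Set.indicator_of_mem hB]
      have := Real.exp_pos (-(∑ j ∈ Finset.range M, a j * U n j ω))
      linarith
    · rw [Set.indicator_of_notMem hB]
      have hnotin : ω ∉ {ω : Ω | 1/8 < |∑' j, a j * U n j ω|} := fun h => hB (hBsub h)
      simp only [Set.mem_setOf_eq, not_lt] at hnotin
      have hP_le : (∑ j ∈ Finset.range M, a j * U n j ω) ≤ ∑' j, a j * U n j ω :=
        Summable.sum_le_tsum (Finset.range M) (fun j _ => mul_nonneg (ha j) (hnonneg n j ω)) hω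
      have h2 : (∑ j ∈ Finset.range M, a j * U n j ω) ≤ 1/8 :=
        hP_le.trans ((le_abs_self _).trans hnotin)
      have h3 := Real.add_one_le_exp (-(∑ j ∈ Finset.range M, a j * U n j ω))
      linarith
  have hexpint : Integrable (fun ω => Real.exp (-(∑ j ∈ Finset.range M, a j * U n j ω))) μ := by
    apply (integrable_const (1:ℝ)).mono'
    · exact (Finset.measurable_sum (Finset.range M)
        (fun j _ => (hmeas n j).const_mul (a j))).neg.exp.aestronglyMeasurable
    · filter_upwards with ω
      rw [Real.norm_eq_abs, abs_of_pos (Real.exp_pos _)]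
      apply Real.exp_le_one_iff.2
      have : (0:ℝ) ≤ ∑ j ∈ Finset.range M, a j * U n j ω :=
        Finset.sum_nonneg fun j _ => mul_nonneg (ha j) (hnonneg n j ω)
      linarith
  have hindint : Integrable (fun ω => (7/8 : ℝ) - Set.indicator B (fun _ => (1:ℝ)) ω) μ := by
    apply (integrable_const (7/8:ℝ)).sub
    rw [integrable_indicator_iff hBmeas]
    exact integrableOn_const (measure_lt_top μ B).ne
  calc (3/4 : ℝ) ≤ 7/8 - (μ B).toReal := by linarith
    _ = ∫ ω, ((7/8 : ℝ) - Set.indicator B (fun _ => (1:ℝ)) ω) ∂μ := by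
        rw [integral_sub (integrable_const _) ((integrable_indicator_iff hBmeas).2
          (integrableOn_const (measure_lt_top μ B).ne))]
        rw [integral_indicator_const _ hBmeas]
        simp
        rfl
    _ ≤ _ := integral_mono_ae hindint hexpint hptwise

end AuxLemmas

/-- **Proposition 3, (ii) ⟹ (i)** of Peligrad–Utev, "Invariance principle for stochastic
processes with short memory". For a double array of i.i.d. non-negative integrable random
variables: if for every non-negative sequence `(a_j)` with `∑ a_j < ∞` the series
`∑_j a_j U_j⁽ⁿ⁾` tends to `0` in probability as `n → ∞`, then `U_1⁽ⁿ⁾ → 0` in probability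
and `sup_n E(U_1⁽ⁿ⁾) < ∞`. -/
theorem stmt4
    {Ω : Type*} [MeasurableSpace Ω] (μ : Measure Ω) [IsProbabilityMeasure μ]
    (U : ℕ → ℕ → Ω → ℝ)
    (hmeas : ∀ n j, Measurable (U n j))
    (hindep : ∀ n, iIndepFun (U n) μ)
    (hident : ∀ n j, IdentDistrib (U n j) (U n 0) μ μ)
    (hnonneg : ∀ n j ω, 0 ≤ U n j ω)
    (hint : ∀ n j, Integrable (U n j) μ)
    (hsum0 : ∀ a : ℕ → ℝ, (∀ j, 0 ≤ a j) → Summable a →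
      ∀ ε : ℝ, 0 < ε →
        Tendsto (fun n => μ {ω : Ω | ε < |∑' j, a j * U n j ω|}) atTop (𝓝 0)) :
    (∀ ε : ℝ, 0 < ε → Tendsto (fun n => μ {ω : Ω | ε < U n 0 ω}) atTop (𝓝 0)) ∧
      (∃ C : ℝ, ∀ n, (∫ ω, U n 0 ω ∂μ) ≤ C) := by
  classical
  constructor
  · -- convergence in probability of `U n 0`
    intro ε hε
    have ha : ∀ j, 0 ≤ (fun j => if j = 0 then (1:ℝ) else 0) j := by
      intro j; dsimp only; split <;> norm_num
    have hs : Summable (fun j => if j = 0 then (1:ℝ) else 0) := (hasSum_ite_eq 0 (1:ℝ)).summable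
    have H := hsum0 _ ha hs ε hε
    have hset : ∀ n, {ω : Ω | ε < |∑' j, (if j = 0 then (1:ℝ) else 0) * U n j ω|}
        = {ω : Ω | ε < U n 0 ω} := by
      intro n; ext ω
      have h1 : (fun j => (if j = 0 then (1:ℝ) else 0) * U n j ω)
          = fun j => if j = 0 then U n 0 ω else 0 := by
        funext j; by_cases h : j = 0 <;> simp [h]
      simp only [Set.mem_setOf_eq, h1, tsum_ite_eq, abs_of_nonneg (hnonneg n 0 ω)]
    simp only [hset] at H
    exact H
  · -- uniform boundedness of the means
    by_contra hCon
    push_neg at hCon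
    set m : ℕ → ℝ := fun n => ∫ ω, U n 0 ω ∂μ with hm
    have hm0 : ∀ n', 0 ≤ m n' := fun n' => integral_nonneg (hnonneg n' 0)
    -- Step 1: choose indices `n k` and truncation levels `N k`
    have key : ∀ k : ℕ, ∃ n N : ℕ, k < n ∧ 1 ≤ N ∧
        (8:ℝ) ≤ ∫ ω, min ((1/2)^k * U n 0 ω) N ∂μ := by
      intro k
      obtain ⟨n, hn⟩ := hCon (8 * 2^k + ∑ i ∈ Finset.range (k+1), m i)
      have hsumnn : (0:ℝ) ≤ ∑ i ∈ Finset.range (k+1), m i :=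
        Finset.sum_nonneg fun i _ => hm0 i
      have hnk : k < n := by
        by_contra h
        push_neg at h
        have h1 : m n ≤ ∑ i ∈ Finset.range (k+1), m i :=
          Finset.single_le_sum (fun i _ => hm0 i) (Finset.mem_range.2 (Nat.lt_succ_of_le h))
        have h2 : (0:ℝ) < 2^k := by positivity
        simp only [hm] at hn
        nlinarith
      have h2k : (0:ℝ) < 2^k := by positivity
      have h8 : (8:ℝ) < (1/2)^k * m n := by
        have h1 : 8 * 2^k < m n := by simp only [hm] at hn; linarith
        have he : (1/2:ℝ)^k = (2^k)⁻¹ := by rw [one_div, inv_pow]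
        rw [he, ← div_eq_inv_mul, lt_div_iff₀ h2k]
        linarith
      have hlim : Tendsto (fun N : ℕ => ∫ ω, min ((1/2)^k * U n 0 ω) N ∂μ) atTop
          (𝓝 (∫ ω, (1/2)^k * U n 0 ω ∂μ)) := by
        apply tendsto_integral_of_dominated_convergence (fun ω => (1/2:ℝ)^k * U n 0 ω)
        · intro N
          exact (((hmeas n 0).const_mul _).min measurable_const).aestronglyMeasurable
        · exact (hint n 0).const_mul _
        · intro N
          filter_upwards with ω
          have h0 : 0 ≤ (1/2:ℝ)^k * U n 0 ω := mul_nonneg (by positivity) (hnonneg n 0 ω)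
          have hge : (0:ℝ) ≤ min ((1/2)^k * U n 0 ω) N := le_min h0 (Nat.cast_nonneg N)
          rw [Real.norm_eq_abs, abs_of_nonneg hge]
          exact min_le_left _ _
        · filter_upwards with ω
          apply tendsto_const_nhds.congr'
          filter_upwards [eventually_ge_atTop ⌈(1/2:ℝ)^k * U n 0 ω⌉₊] with N hN
          rw [min_eq_left]
          exact (Nat.le_ceil _).trans (Nat.cast_le.2 hN)
      rw [MeasureTheory.integral_const_mul] at hlim
      have hev := (hlim.eventually_const_le h8).and (eventually_ge_atTop 1)
      obtain ⟨N, hN8, hN1⟩ := hev.exists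
      exact ⟨n, N, hnk, hN1, hN8⟩
    choose n N hkn hN1 h8 using key
    -- Step 2: block structure and the weight sequence
    set b : ℕ → ℕ := fun k => ∑ i ∈ Finset.range k, N i with hb
    have hbsucc : ∀ k, b (k+1) = b k + N k := fun k => Finset.sum_range_succ N k
    have hbmono : StrictMono b := strictMono_nat_of_lt_succ fun k => by
      have := hN1 k; rw [hbsucc]; omega
    have hbk : ∀ k, k ≤ b k := fun k => hbmono.le_apply
    set idx : ℕ → ℕ := fun j => Nat.findGreatest (fun k => b k ≤ j) j with hidxdef
    have hidx : ∀ k i, i < N k → idx (b k + i) = k := by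
      intro k i hi
      have hle : k ≤ idx (b k + i) :=
        Nat.le_findGreatest ((hbk k).trans (Nat.le_add_right _ _)) (Nat.le_add_right _ _)
      have hge : idx (b k + i) ≤ k := by
        by_contra h
        push_neg at h
        have hspec : b (idx (b k + i)) ≤ b k + i :=
          Nat.findGreatest_spec (P := fun k' => b k' ≤ b k + i) (n := b k + i)
            (Nat.zero_le _) (by simp [hb])
        have h2 : b (k+1) ≤ b (idx (b k + i)) := hbmono.monotone h
        rw [hbsucc] at h2
        omega
      omega
    set a : ℕ → ℝ := fun j => (1/2:ℝ)^(idx j) / (N (idx j)) with hadef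
    have ha : ∀ j, 0 ≤ a j := fun j => by positivity
    have hablock : ∀ k i, i < N k → a (b k + i) = (1/2:ℝ)^k / N k := by
      intro k i hi; simp only [hadef, hidx k i hi]
    have hpartial : ∀ K, ∑ j ∈ Finset.range (b K), a j = ∑ t ∈ Finset.range K, (1/2:ℝ)^t := by
      intro K
      induction K with
      | zero => simp [hb]
      | succ K ih =>
        rw [hbsucc, Finset.sum_range_add, ih, Finset.sum_range_succ]
        congr 1
        rw [Finset.sum_congr rfl fun i hi => hablock K i (Finset.mem_range.1 hi)]
        rw [Finset.sum_const, nsmul_eq_mul]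
        have : (N K : ℝ) ≠ 0 := by
          have := hN1 K; positivity
        field_simp
        rw [Finset.card_range]
    have hsummable : Summable a := by
      apply summable_of_sum_range_le ha
      intro M
      calc ∑ j ∈ Finset.range M, a j ≤ ∑ j ∈ Finset.range (b M), a j := by
            apply Finset.sum_le_sum_of_subset_of_nonneg
            · exact Finset.range_subset_range.2 (hbk M)
            · intro i _ _; exact ha i
        _ = ∑ t ∈ Finset.range M, (1/2:ℝ)^t := hpartial M
        _ ≤ 2 := sum_geometric_two_le M
    -- Step 3: apply the hypothesis to the sequence `a`
    have H := hsum0 a ha hsummable (1/8) (by norm_num)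
    have hev : ∀ᶠ n' in atTop,
        μ {ω : Ω | 1/8 < |∑' j, a j * U n' j ω|} < ENNReal.ofReal (1/8) :=
      H.eventually_lt_const (ENNReal.ofReal_pos.2 (by norm_num))
    obtain ⟨n₀, hn₀⟩ := eventually_atTop.1 hev
    set k : ℕ := n₀ with hkdef
    set nn : ℕ := n k with hnn
    have hp : μ {ω : Ω | 1/8 < |∑' j, a j * U nn j ω|} < ENNReal.ofReal (1/8) :=
      hn₀ nn (le_of_lt (hkn k))
    have hae := aux_ae_summable μ U hmeas hident hnonneg hint nn a ha hsummable
    have h34 := aux_lower_34 μ U hmeas hnonneg nn a ha (b (k+1)) hae hp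
    have hprodid := aux_prod_identity μ U hmeas hindep hident nn a (b (k+1))
    -- Step 4: upper bound on the product
    set φk : ℝ := ∫ ω, Real.exp (-(((1/2:ℝ)^k / N k) * U nn 0 ω)) ∂μ with hφkdef
    have hφk0 : 0 ≤ φk := integral_nonneg fun ω => (Real.exp_pos _).le
    have hφk1 : φk ≤ 1 :=
      aux_phi_le_one μ U hmeas hnonneg nn ((1/2:ℝ)^k / N k) (by positivity)
    have hkey4 : (4:ℝ) ≤ N k * (1 - φk) :=
      aux_key_est μ U hmeas hnonneg (n k) (N k) (hN1 k) ((1/2:ℝ)^k) (by positivity) (h8 k)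
    have hsplit : (∏ j ∈ Finset.range (b (k+1)), ∫ ω, Real.exp (-(a j * U nn 0 ω)) ∂μ)
        ≤ φk ^ (N k) := by
      rw [hbsucc k, Finset.prod_range_add]
      have h2 : (∏ i ∈ Finset.range (N k),
          ∫ ω, Real.exp (-(a (b k + i) * U nn 0 ω)) ∂μ) = φk ^ N k := by
        rw [Finset.prod_congr rfl (fun i hi => by rw [hablock k i (Finset.mem_range.1 hi)]),
          Finset.prod_const, Finset.card_range]
      rw [h2]
      apply mul_le_of_le_one_left (pow_nonneg hφk0 _)
      apply Finset.prod_le_one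
      · intro i _; exact integral_nonneg fun ω => (Real.exp_pos _).le
      · intro i _; exact aux_phi_le_one μ U hmeas hnonneg nn (a i) (ha i)
    have hpow : φk ^ (N k) ≤ Real.exp (-4) := by
      calc φk ^ N k ≤ (Real.exp (-(1 - φk))) ^ N k := by
            apply pow_le_pow_left₀ hφk0
            have := Real.add_one_le_exp (-(1 - φk)); linarith
        _ = Real.exp ((N k : ℝ) * (-(1 - φk))) := by rw [← Real.exp_nat_mul]
        _ ≤ Real.exp (-4) := by
            apply Real.exp_le_exp.2; nlinarith [hkey4]
    have hlt : Real.exp (-4:ℝ) < 3/4 := by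
      have h1 : Real.exp (-4:ℝ) ≤ Real.exp (-1) := Real.exp_le_exp.2 (by norm_num)
      have h2 : Real.exp (-1:ℝ) ≤ 1/2 := by
        rw [Real.exp_neg]
        have h3 : (2:ℝ) ≤ Real.exp 1 := by
          have := Real.add_one_le_exp (1:ℝ); linarith
        rw [inv_le_comm₀ (Real.exp_pos 1) (by norm_num)]
        rw [one_div, inv_inv]
        exact h3
      linarith
    rw [hprodid] at h34
    linarith [hsplit, h34, hpow]
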